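/- Let m ≥ 1, let X_1, …, X_m : ℝⁿ → ℝⁿ be continuous maps, let f : ℝⁿ → ℝ be continuously differentiable, and define |Xf|(z) := sqrt(Σ_{i=1}^m (Df(z)[X_i(z)])²), where Df(z) is the Fréchet derivative of f at z. Let r > 0, let a_1, …, a_m : [0,1] → ℝ satisfy |a_i(t)| ≤ r for all t and i, and let γ : [0,1] → ℝⁿ be a Lipschitz curve such that for almost every t ∈ [0,1] the derivative γ′(t) exists and equals Σ_{i=1}^m a_i(t) X_i(γ(t)). If M ≥ 0 is such that |Xf|(γ(t)) ≤ M for every t ∈ [0,1], then |f(γ(1)) − f(γ(0))| ≤ √m · r · M. -/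

import Mathlib

open MeasureTheory Filter Topology

theorem lip_ftc (G : ℝ → ℝ) (K : NNReal) (hG : LipschitzWith K G) (C : ℝ)
    (h : ∀ᵐ t ∂(volume.restrict (Set.Ioo (0 : ℝ) 1)), ∃ v, HasDerivAt G v t ∧ |v| ≤ C) :
    |G 1 - G 0| ≤ C := by
  have hGc : Continuous G := hG.continuous
  set μ := volume.restrict (Set.Ioo (0 : ℝ) 1) with hμ
  haveI : IsFiniteMeasure μ := by
    constructor
    rw [hμ, Measure.restrict_apply_univ, Real.volume_Ioo]
    norm_num
  set d : ℝ → ℝ := deriv G with hd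
  have hae : ∀ᵐ t ∂μ, HasDerivAt G (d t) t ∧ |d t| ≤ C := by
    filter_upwards [h] with t ht
    obtain ⟨v, hv, hb⟩ := ht
    rw [hd, hv.deriv]
    exact ⟨hv, hb⟩
  set F : ℕ → ℝ → ℝ := fun n t => ((n : ℝ) + 1) * (G (t + ((n : ℝ) + 1)⁻¹) - G t) with hF
  have hpos : ∀ n : ℕ, (0 : ℝ) < ((n : ℝ) + 1)⁻¹ := fun n => by positivity
  -- DCT
  have hDCT : Tendsto (fun n => ∫ t, F n t ∂μ) atTop (𝓝 (∫ t, d t ∂μ)) := by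
    apply tendsto_integral_of_dominated_convergence (fun _ => (K : ℝ))
    · intro n
      exact (continuous_const.mul ((hGc.comp (continuous_id.add continuous_const)).sub hGc)).aestronglyMeasurable
    · exact integrable_const _
    · intro n
      filter_upwards with t
      have := hG.dist_le_mul (t + ((n : ℝ) + 1)⁻¹) t
      rw [Real.dist_eq, Real.dist_eq] at this
      simp only [add_sub_cancel_left, abs_of_pos (hpos n)] at this
      rw [hF]
      simp only [Real.norm_eq_abs, abs_mul]
      calc |((n : ℝ) + 1)| * |G (t + ((n : ℝ) + 1)⁻¹) - G t|
          ≤ |((n : ℝ) + 1)| * ((K : ℝ) * ((n : ℝ) + 1)⁻¹) := by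
            apply mul_le_mul_of_nonneg_left this (abs_nonneg _)
        _ = (K : ℝ) := by
            rw [abs_of_pos (by positivity)]
            field_simp
    · filter_upwards [hae] with t ht
      have hslope := hasDerivAt_iff_tendsto_slope.1 ht.1
      have hseq : Tendsto (fun n : ℕ => t + ((n : ℝ) + 1)⁻¹) atTop (𝓝[≠] t) := by
        rw [tendsto_nhdsWithin_iff]
        constructor
        · have : Tendsto (fun n : ℕ => ((n : ℝ) + 1)⁻¹) atTop (𝓝 0) := by
            simpa [one_div] using tendsto_one_div_add_atTop_nhds_zero_nat (𝕜 := ℝ)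
          simpa using tendsto_const_nhds.add this
        · filter_upwards with n
          simp only [Set.mem_compl_iff, Set.mem_singleton_iff]
          have := hpos n
          intro hcon
          nlinarith [hpos n]
      apply (hslope.comp hseq).congr
      intro n
      simp only [Function.comp_apply, slope_def_field, hF]
      rw [add_sub_cancel_left, div_eq_mul_inv, inv_inv, mul_comm]
  -- the integral is bounded by C
  have hμ0 : μ ≠ 0 := by
    intro hcon
    have : μ Set.univ = 0 := by rw [hcon]; simp
    rw [hμ, Measure.restrict_apply_univ, Real.volume_Ioo] at this
    norm_num at this
  haveI : (ae μ).NeBot := ae_neBot.2 hμ0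
  have hC : (0 : ℝ) ≤ C := by
    obtain ⟨t, v, hv, hb⟩ := h.exists
    exact le_trans (abs_nonneg v) hb
  -- integral of d is bounded by C
  have hd_int : Integrable d μ := by
    refine Integrable.mono' (integrable_const C) (measurable_deriv G).aestronglyMeasurable ?_
    filter_upwards [hae] with t ht
    simpa using ht.2
  have hIbound : |∫ t, d t ∂μ| ≤ C := by
    calc |∫ t, d t ∂μ| ≤ ∫ t, |d t| ∂μ := by
          simpa using norm_integral_le_integral_norm (μ := μ) d
      _ ≤ ∫ _t, C ∂μ := by
          refine integral_mono_ae hd_int.abs (integrable_const C) ?_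
          filter_upwards [hae] with t ht using ht.2
      _ = C := by
          rw [integral_const]
          rw [hμ, measureReal_restrict_apply_univ, Real.volume_real_Ioo]
          norm_num
  -- boundary limit: averages converge to the value, for Lipschitz G
  have key : ∀ c : ℝ, Tendsto
      (fun n : ℕ => ((n : ℝ) + 1) * ∫ s in c..(c + ((n : ℝ) + 1)⁻¹), G s) atTop (𝓝 (G c)) := by
    intro c
    rw [tendsto_iff_dist_tendsto_zero]
    apply squeeze_zero (fun n => dist_nonneg) (g := fun n : ℕ => (K : ℝ) * ((n : ℝ) + 1)⁻¹)
    · intro n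
      set hh : ℝ := ((n : ℝ) + 1)⁻¹ with hhh
      have hh0 : 0 < hh := hpos n
      have hmul1 : ((n : ℝ) + 1) * hh = 1 := by rw [hhh]; field_simp
      have hsub : (((n : ℝ) + 1) * ∫ s in c..(c + hh), G s) - G c
          = ((n : ℝ) + 1) * ∫ s in c..(c + hh), (G s - G c) := by
        rw [intervalIntegral.integral_sub (hGc.intervalIntegrable _ _) intervalIntegrable_const,
          intervalIntegral.integral_const]
        simp only [add_sub_cancel_left, smul_eq_mul]
        linear_combination G c * hmul1
      rw [Real.dist_eq, hsub, abs_mul]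
      have hbnd : ‖∫ s in c..(c + hh), (G s - G c)‖ ≤ (K : ℝ) * hh * |c + hh - c| := by
        apply intervalIntegral.norm_integral_le_of_norm_le_const
        intro x hx
        rw [Set.uIoc_of_le (by linarith)] at hx
        have h1 := hG.dist_le_mul x c
        rw [Real.dist_eq, Real.dist_eq] at h1
        have : |x - c| ≤ hh := by
          rw [abs_of_pos (by linarith [hx.1])]
          linarith [hx.2]
        calc ‖G x - G c‖ = |G x - G c| := rfl
          _ ≤ (K : ℝ) * |x - c| := h1
          _ ≤ (K : ℝ) * hh := by
              exact mul_le_mul_of_nonneg_left this (by positivity)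
      calc |((n : ℝ) + 1)| * |∫ s in c..(c + hh), (G s - G c)|
          ≤ |((n : ℝ) + 1)| * ((K : ℝ) * hh * |c + hh - c|) := by
            exact mul_le_mul_of_nonneg_left hbnd (abs_nonneg _)
        _ = (K : ℝ) * hh := by
            rw [abs_of_pos (by positivity), add_sub_cancel_left, abs_of_pos hh0, hhh]
            field_simp
    · have : Tendsto (fun n : ℕ => ((n : ℝ) + 1)⁻¹) atTop (𝓝 0) := by
        simpa [one_div] using tendsto_one_div_add_atTop_nhds_zero_nat (𝕜 := ℝ)
      simpa using this.const_mul (K : ℝ)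
  -- the integrals of F n converge to G 1 - G 0
  have hB : Tendsto (fun n => ∫ t, F n t ∂μ) atTop (𝓝 (G 1 - G 0)) := by
    apply Tendsto.congr (f₁ := fun n : ℕ =>
      (((n : ℝ) + 1) * ∫ s in (1 : ℝ)..(1 + ((n : ℝ) + 1)⁻¹), G s) -
      (((n : ℝ) + 1) * ∫ s in (0 : ℝ)..(0 + ((n : ℝ) + 1)⁻¹), G s)) ?_ ((key 1).sub (key 0))
    intro n
    set hh : ℝ := ((n : ℝ) + 1)⁻¹ with hhh
    have hh0 : 0 < hh := hpos n
    have hint : ∀ u v : ℝ, IntervalIntegrable G volume u v := fun u v =>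
      hGc.intervalIntegrable u v
    have hμint : ∫ t, F n t ∂μ = ∫ t in (0 : ℝ)..1, F n t := by
      rw [intervalIntegral.integral_of_le zero_le_one, hμ,
        ← integral_Ioc_eq_integral_Ioo]
    rw [hμint, hF]
    simp only
    have hcont : Continuous fun t : ℝ => G (t + hh) := hGc.comp (continuous_add_right hh)
    rw [intervalIntegral.integral_const_mul,
      intervalIntegral.integral_sub (hcont.intervalIntegrable 0 1) (hint 0 1)]
    have hcomp : (∫ t in (0 : ℝ)..1, G (t + hh)) = ∫ s in (0 + hh)..(1 + hh), G s :=
      intervalIntegral.integral_comp_add_right G hh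
    rw [hcomp]
    have h1 : (∫ s in (0 : ℝ)..(0 + hh), G s) + ∫ s in (0 + hh : ℝ)..(1 + hh), G s
        = ∫ s in (0 : ℝ)..(1 + hh), G s :=
      intervalIntegral.integral_add_adjacent_intervals (hint _ _) (hint _ _)
    have h2 : (∫ s in (0 : ℝ)..1, G s) + ∫ s in (1 : ℝ)..(1 + hh), G s
        = ∫ s in (0 : ℝ)..(1 + hh), G s :=
      intervalIntegral.integral_add_adjacent_intervals (hint _ _) (hint _ _)
    linear_combination ((n : ℝ) + 1) * (h2 - h1)
  have hfin : G 1 - G 0 = ∫ t, d t ∂μ := tendsto_nhds_unique hB hDCT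
  rw [hfin]
  exact hIbound

/-- Theorem 8.3 ("Lagrange Theorem"): if `γ` is a Lipschitz curve that is admissible
(sub-unit of speed `r`) for the vector fields `X_1, …, X_m`, and the horizontal
gradient length `|Xf|` is bounded by `M` along `γ`, then
`|f(γ(1)) − f(γ(0))| ≤ √m · r · M`. -/
theorem stmt13 (n m : ℕ) (hm : 1 ≤ m)
    (X : Fin m → (Fin n → ℝ) → (Fin n → ℝ)) (hX : ∀ i, Continuous (X i))
    (f : (Fin n → ℝ) → ℝ) (hf : ContDiff ℝ 1 f)
    (r : ℝ) (hr : 0 < r)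
    (a : Fin m → ℝ → ℝ) (ha : ∀ i t, |a i t| ≤ r)
    (γ : ℝ → (Fin n → ℝ)) (L : NNReal) (hγ : LipschitzOnWith L γ (Set.Icc 0 1))
    (hderiv : ∀ᵐ t ∂(volume.restrict (Set.Icc (0 : ℝ) 1)),
      HasDerivAt γ (∑ i, a i t • X i (γ t)) t)
    (M : ℝ) (hM0 : 0 ≤ M)
    (hM : ∀ t ∈ Set.Icc (0 : ℝ) 1,
      Real.sqrt (∑ i, (fderiv ℝ f (γ t) (X i (γ t))) ^ 2) ≤ M) :
    |f (γ 1) - f (γ 0)| ≤ Real.sqrt m * r * M := by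
  have hf1 : Differentiable ℝ f := hf.differentiable one_ne_zero
  -- the image of γ is bounded
  have hKimg : IsCompact (γ '' Set.Icc 0 1) := isCompact_Icc.image_of_continuousOn hγ.continuousOn
  obtain ⟨R, hR⟩ := hKimg.isBounded.subset_closedBall 0
  -- f is Lipschitz on the closed ball
  have hfc : Continuous fun z => fderiv ℝ f z := hf.continuous_fderiv one_ne_zero
  obtain ⟨Kf, hKf⟩ := (isCompact_closedBall (0 : Fin n → ℝ) R).exists_bound_of_continuousOn
    hfc.continuousOn
  set Kf' : NNReal := ⟨max Kf 0, le_max_right _ _⟩ with hKf'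
  have hfl : LipschitzOnWith Kf' f (Metric.closedBall 0 R) := by
    apply Convex.lipschitzOnWith_of_nnnorm_fderiv_le (fun x _ => hf1 x) ?_
      (convex_closedBall 0 R)
    intro x hx
    rw [← NNReal.coe_le_coe, coe_nnnorm]
    exact le_trans (hKf x hx) (le_max_left _ _)
  -- f ∘ γ is Lipschitz on [0, 1]
  have hmaps : Set.MapsTo γ (Set.Icc 0 1) (Metric.closedBall 0 R) :=
    fun t ht => hR (Set.mem_image_of_mem γ ht)
  have hgl : LipschitzOnWith (Kf' * L) (f ∘ γ) (Set.Icc 0 1) := hfl.comp hγ hmaps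
  obtain ⟨G, hGlip, hGeq⟩ := hgl.extend_real
  -- the derivative hypothesis for G
  have hae2 : ∀ᵐ t ∂(volume.restrict (Set.Ioo (0 : ℝ) 1)),
      HasDerivAt γ (∑ i, a i t • X i (γ t)) t :=
    ae_restrict_of_ae_restrict_of_subset Set.Ioo_subset_Icc_self hderiv
  have hmem : ∀ᵐ t ∂(volume.restrict (Set.Ioo (0 : ℝ) 1)), t ∈ Set.Ioo (0 : ℝ) 1 :=
    ae_restrict_mem measurableSet_Ioo
  have hin : ∀ᵐ t ∂(volume.restrict (Set.Ioo (0 : ℝ) 1)),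
      ∃ v, HasDerivAt G v t ∧ |v| ≤ Real.sqrt m * r * M := by
    filter_upwards [hae2, hmem] with t hdγ htIoo
    refine ⟨∑ i, a i t * fderiv ℝ f (γ t) (X i (γ t)), ?_, ?_⟩
    · have hcomp : HasDerivAt (f ∘ γ)
          ((fderiv ℝ f (γ t)) (∑ i, a i t • X i (γ t))) t :=
        (hf1 (γ t)).hasFDerivAt.comp_hasDerivAt t hdγ
      have hval : (fderiv ℝ f (γ t)) (∑ i, a i t • X i (γ t))
          = ∑ i, a i t * fderiv ℝ f (γ t) (X i (γ t)) := by
        rw [map_sum]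
        simp [smul_eq_mul]
      rw [hval] at hcomp
      have hnb : Set.Icc (0 : ℝ) 1 ∈ 𝓝 t := Icc_mem_nhds htIoo.1 htIoo.2
      have heq : G =ᶠ[𝓝 t] f ∘ γ := eventually_of_mem hnb fun y hy => (hGeq hy).symm
      exact hcomp.congr_of_eventuallyEq heq
    · have hCS := Finset.sum_mul_sq_le_sq_mul_sq Finset.univ (fun i => a i t)
        (fun i => fderiv ℝ f (γ t) (X i (γ t)))
      have h1 : |∑ i, a i t * fderiv ℝ f (γ t) (X i (γ t))|
          ≤ Real.sqrt (∑ i, (a i t) ^ 2) * Real.sqrt (∑ i, (fderiv ℝ f (γ t) (X i (γ t))) ^ 2) := by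
        rw [← Real.sqrt_sq_eq_abs, ← Real.sqrt_mul (by positivity)]
        exact Real.sqrt_le_sqrt hCS
      have h2 : Real.sqrt (∑ i, (a i t) ^ 2) ≤ Real.sqrt m * r := by
        have : (∑ i, (a i t) ^ 2) ≤ (m : ℝ) * r ^ 2 := by
          calc (∑ i : Fin m, (a i t) ^ 2) ≤ ∑ _i : Fin m, r ^ 2 := by
                apply Finset.sum_le_sum
                intro i _
                rw [← sq_abs]
                exact pow_le_pow_left₀ (abs_nonneg _) (ha i t) 2
            _ = (m : ℝ) * r ^ 2 := by simp [Finset.sum_const, mul_comm]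
        calc Real.sqrt (∑ i, (a i t) ^ 2) ≤ Real.sqrt ((m : ℝ) * r ^ 2) := Real.sqrt_le_sqrt this
          _ = Real.sqrt m * r := by
              rw [Real.sqrt_mul (Nat.cast_nonneg m), Real.sqrt_sq hr.le]
      have h3 : Real.sqrt (∑ i, (fderiv ℝ f (γ t) (X i (γ t))) ^ 2) ≤ M :=
        hM t (Set.Ioo_subset_Icc_self htIoo)
      calc |∑ i, a i t * fderiv ℝ f (γ t) (X i (γ t))|
          ≤ Real.sqrt (∑ i, (a i t) ^ 2) *
            Real.sqrt (∑ i, (fderiv ℝ f (γ t) (X i (γ t))) ^ 2) := h1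
        _ ≤ (Real.sqrt m * r) * M := by
            apply mul_le_mul h2 h3 (Real.sqrt_nonneg _) (by positivity)
  have := lip_ftc G (Kf' * L) hGlip (Real.sqrt m * r * M) hin
  rwa [← hGeq (Set.right_mem_Icc.2 zero_le_one), ← hGeq (Set.left_mem_Icc.2 zero_le_one)] at this
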